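/- arXiv:2402.07494 — 7 statements merged into one kernel-verified Lean document; each statement's English description precedes it below -/
import Mathlib

section
/- The intersection of two semilinear subsets of ℕ^d is semilinear. -/
open Finset Set

/-- A subset of `ℕ^d` is linear if it has the form `{c + Σ λᵢ pᵢ}`. -/
def IsLinearSet' {d : ℕ} (L : Set (Fin d → ℕ)) : Prop :=
  ∃ (c : Fin d → ℕ) (m : ℕ) (p : Fin m → Fin d → ℕ),
    L = {x | ∃ lam : Fin m → ℕ, x = c + ∑ i, lam i • p i}

/-- A semilinear set is a finite union of linear sets. -/
def IsSemilinearSet' {d : ℕ} (L : Set (Fin d → ℕ)) : Prop :=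
  ∃ (n : ℕ) (Ls : Fin n → Set (Fin d → ℕ)),
    (∀ i, IsLinearSet' (Ls i)) ∧ L = ⋃ i, Ls i

namespace InterSemilinear

variable {k d : ℕ}

/-- minimal elements of a set in ℕ^k -/
def MinOf (S : Set (Fin k → ℕ)) : Set (Fin k → ℕ) :=
  {u ∈ S | ∀ v ∈ S, v ≤ u → v = u}

lemma minOf_finite (S : Set (Fin k → ℕ)) : (MinOf S).Finite := by
  apply IsAntichain.finite_of_partiallyWellOrderedOn (r := (· ≤ ·))
  · intro a ha b hb hab h
    exact hab (hb.2 a ha.1 h)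
  · exact Set.isPWO_of_wellQuasiOrderedLE _

lemma exists_min_le {S : Set (Fin k → ℕ)} {u : Fin k → ℕ} (hu : u ∈ S) :
    ∃ s ∈ MinOf S, s ≤ u := by
  have hn : ∃ n, ∑ i, u i = n := ⟨_, rfl⟩
  obtain ⟨n, hn⟩ := hn
  induction n using Nat.strong_induction_on generalizing u with
  | _ n ih =>
  by_cases h : u ∈ MinOf S
  · exact ⟨u, h, le_refl u⟩
  · simp only [MinOf, Set.mem_setOf_eq, hu, true_and, not_forall] at h
    obtain ⟨v, hv, hvu, hne⟩ := h
    have hlt : ∑ i, v i < n := by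
      subst hn
      refine Finset.sum_lt_sum (fun i _ => hvu i) ?_
      by_contra hc
      push_neg at hc
      exact hne (funext fun i => le_antisymm (hvu i) (hc i (Finset.mem_univ i)))
    obtain ⟨s, hs, hsv⟩ := ih _ hlt hv rfl
    exact ⟨s, hs, hsv.trans hvu⟩

/-- The solution set of `a + F u = b + G u` is a finite union of linear sets with
explicit periods that are homogeneous solutions. -/
lemma sol_semilinear (a b : Fin d → ℕ) (F G : (Fin k → ℕ) →+ (Fin d → ℕ)) :
    ∃ (N M : ℕ) (s : Fin N → Fin k → ℕ) (π : Fin M → Fin k → ℕ),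
      {u | a + F u = b + G u} =
        ⋃ j, {x | ∃ lam : Fin M → ℕ, x = s j + ∑ i, lam i • π i} := by
  set S : Set (Fin k → ℕ) := {u | a + F u = b + G u} with hSdef
  set H : Set (Fin k → ℕ) := {h | F h = G h} with hHdef
  have subSH : ∀ u v, u ∈ S → v ∈ S → v ≤ u → u - v ∈ H := by
    intro u v hu hv hvu
    have hc : u - v + v = u := tsub_add_cancel_of_le hvu
    have h1 : a + (F (u - v) + F v) = b + (G (u - v) + G v) := by
      rw [← map_add, ← map_add, hc]; exact hu
    have h2 : a + F v = b + G v := hv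
    have : (a + F v) + F (u - v) = (b + G v) + G (u - v) := by
      rw [add_assoc, add_assoc, add_comm (F v), add_comm (G v)]; exact h1
    rw [h2] at this
    exact add_left_cancel this
  have subHH : ∀ h h', h ∈ H → h' ∈ H → h' ≤ h → h - h' ∈ H := by
    intro h h' hh hh' hle
    have hc : h - h' + h' = h := tsub_add_cancel_of_le hle
    have h1 : F (h - h') + F h' = G (h - h') + G h' := by
      rw [← map_add, ← map_add, hc]; exact hh
    rw [show F h' = G h' from hh'] at h1
    exact add_right_cancel h1
  have addSH : ∀ u h, u ∈ S → h ∈ H → u + h ∈ S := by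
    intro u h hu hh
    show a + F (u + h) = b + G (u + h)
    rw [map_add, map_add, ← add_assoc, ← add_assoc]
    rw [show F h = G h from hh]
    exact congrArg (· + G h) hu
  obtain ⟨N, s, hs⟩ := (minOf_finite S).fin_embedding
  obtain ⟨M, π, hπ⟩ := (minOf_finite (H \ {0})).fin_embedding
  have hπH : ∀ i, (π i : Fin k → ℕ) ∈ H := by
    intro i
    have : (π i : Fin k → ℕ) ∈ MinOf (H \ {0}) := hπ ▸ Set.mem_range_self i
    exact this.1.1
  -- any sum of the periods is homogeneous
  have Hsum : ∀ lam : Fin M → ℕ, (∑ i, lam i • π i) ∈ H := by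
    intro lam
    show F _ = G _
    rw [map_sum, map_sum]
    refine Finset.sum_congr rfl fun i _ => ?_
    rw [map_nsmul, map_nsmul, hπH i]
  -- decomposition of homogeneous solutions
  have hcomb : ∀ h ∈ H, ∃ lam : Fin M → ℕ, h = ∑ i, lam i • π i := by
    intro h hh
    have hn : ∃ n, ∑ i, h i = n := ⟨_, rfl⟩
    obtain ⟨n, hn⟩ := hn
    induction n using Nat.strong_induction_on generalizing h with
    | _ n ih =>
    by_cases h0 : h = 0
    · exact ⟨0, by simp [h0]⟩
    · have hmem : h ∈ H \ {0} := ⟨hh, h0⟩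
      obtain ⟨p, hp, hple⟩ := exists_min_le hmem
      obtain ⟨i₀, hi₀⟩ : ∃ i₀, (π i₀ : Fin k → ℕ) = p := by
        have : p ∈ Set.range π := hπ ▸ hp
        exact this
      have hpH : p ∈ H := hp.1.1
      have hp0 : p ≠ 0 := hp.1.2
      have hsub : h - p ∈ H := subHH h p hh hpH hple
      have hcc : h - p + p = h := tsub_add_cancel_of_le hple
      have hpsum : 0 < ∑ i, p i := by
        rcases Function.ne_iff.mp hp0 with ⟨i, hi⟩
        exact Finset.sum_pos' (fun _ _ => Nat.zero_le _)
          ⟨i, Finset.mem_univ i, Nat.pos_of_ne_zero hi⟩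
      have hlt : ∑ i, (h - p) i < n := by
        subst hn
        have : ∑ i, (h - p) i + ∑ i, p i = ∑ i, h i := by
          rw [← Finset.sum_add_distrib]
          exact Finset.sum_congr rfl fun i _ => congrFun hcc i
        omega
      obtain ⟨lam, hlam⟩ := ih _ hlt (h - p) hsub rfl
      refine ⟨fun i => lam i + (if i = i₀ then 1 else 0), ?_⟩
      have key : ∑ i, (lam i + (if i = i₀ then 1 else 0)) • (π i : Fin k → ℕ)
          = (∑ i, lam i • π i) + π i₀ := by
        have e1 : ∀ i ∈ Finset.univ, (lam i + (if i = i₀ then 1 else 0)) • (π i : Fin k → ℕ)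
            = lam i • π i + (if i = i₀ then (π i₀ : Fin k → ℕ) else 0) := by
          intro i _
          rw [add_smul]
          congr 1
          split <;> simp_all
        rw [Finset.sum_congr rfl e1, Finset.sum_add_distrib,
          Finset.sum_ite_eq' Finset.univ i₀]
        simp
      rw [key, ← hlam, hi₀]
      exact hcc.symm
  refine ⟨N, M, s, π, ?_⟩
  ext u
  simp only [Set.mem_iUnion, Set.mem_setOf_eq]
  constructor
  · intro hu
    have hu' : u ∈ S := hu
    obtain ⟨s₀, hs₀, hle⟩ := exists_min_le hu'
    obtain ⟨j, hj⟩ : ∃ j, (s j : Fin k → ℕ) = s₀ := by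
      have : s₀ ∈ Set.range s := hs ▸ hs₀
      exact this
    have hsub : u - s₀ ∈ H := subSH u s₀ hu' hs₀.1 hle
    obtain ⟨lam, hlam⟩ := hcomb _ hsub
    refine ⟨j, lam, ?_⟩
    rw [hj, ← hlam, add_comm]
    exact (tsub_add_cancel_of_le hle).symm
  · rintro ⟨j, lam, rfl⟩
    have hsj : (s j : Fin k → ℕ) ∈ MinOf S := by
      rw [← hs]; exact Set.mem_range_self j
    exact addSH _ _ hsj.1 (Hsum lam)

/-- the additive map `u ↦ ∑ uᵢ • Pᵢ` -/
def linComb (P : Fin k → Fin d → ℕ) : (Fin k → ℕ) →+ (Fin d → ℕ) where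
  toFun u := ∑ i, u i • P i
  map_zero' := by simp
  map_add' u v := by
    simp only [Pi.add_apply, add_smul]
    exact Finset.sum_add_distrib

lemma inter_linear {d : ℕ} {L₁ L₂ : Set (Fin d → ℕ)}
    (h₁ : IsLinearSet' L₁) (h₂ : IsLinearSet' L₂) :
    IsSemilinearSet' (L₁ ∩ L₂) := by
  obtain ⟨c₁, m, p, rfl⟩ := h₁
  obtain ⟨c₂, n, q, rfl⟩ := h₂
  set P : Fin (m + n) → Fin d → ℕ := Fin.append p 0 with hP
  set Q : Fin (m + n) → Fin d → ℕ := Fin.append 0 q with hQ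
  set F := linComb P with hFdef
  set G := linComb Q with hGdef
  have hF : ∀ u : Fin (m + n) → ℕ, F u = ∑ i, (u (Fin.castAdd n i)) • p i := by
    intro u
    show ∑ i, u i • P i = _
    rw [Fin.sum_univ_add]
    simp [hP, Fin.append_left, Fin.append_right]
  have hG : ∀ u : Fin (m + n) → ℕ, G u = ∑ i, (u (Fin.natAdd m i)) • q i := by
    intro u
    show ∑ i, u i • Q i = _
    rw [Fin.sum_univ_add]
    simp [hQ, Fin.append_left, Fin.append_right]
  have him : {x | ∃ lam : Fin m → ℕ, x = c₁ + ∑ i, lam i • p i}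
      ∩ {x | ∃ lam : Fin n → ℕ, x = c₂ + ∑ i, lam i • q i}
      = (fun u => c₁ + F u) '' {u | c₁ + F u = c₂ + G u} := by
    ext x
    constructor
    · rintro ⟨⟨lam, rfl⟩, ⟨mu, hmu⟩⟩
      refine ⟨Fin.append lam mu, ?_, ?_⟩
      · show c₁ + F _ = c₂ + G _
        rw [hF, hG]
        simp only [Fin.append_left, Fin.append_right]
        exact hmu
      · show c₁ + F _ = _
        rw [hF]
        simp only [Fin.append_left]
    · rintro ⟨u, hu, rfl⟩
      constructor
      · exact ⟨fun i => u (Fin.castAdd n i), by show c₁ + F u = _; rw [hF]⟩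
      · exact ⟨fun i => u (Fin.natAdd m i), by
          show c₁ + F u = _
          rw [show c₁ + F u = c₂ + G u from hu, hG]⟩
  obtain ⟨N, M, s, π, hsol⟩ := sol_semilinear c₁ c₂ F G
  refine ⟨N, fun j => (fun u => c₁ + F u) ''
      {x | ∃ lam : Fin M → ℕ, x = s j + ∑ i, lam i • π i}, ?_, ?_⟩
  · intro j
    refine ⟨c₁ + F (s j), M, fun i => F (π i), ?_⟩
    ext x
    constructor
    · rintro ⟨u, ⟨lam, rfl⟩, rfl⟩
      refine ⟨lam, ?_⟩
      show c₁ + F (s j + ∑ i, lam i • π i) = _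
      rw [map_add, map_sum, ← add_assoc]
      congr 1
      exact Finset.sum_congr rfl fun i _ => map_nsmul F (lam i) (π i)
    · rintro ⟨lam, rfl⟩
      refine ⟨s j + ∑ i, lam i • π i, ⟨lam, rfl⟩, ?_⟩
      show c₁ + F (s j + ∑ i, lam i • π i) = _
      rw [map_add, map_sum, ← add_assoc]
      congr 1
      exact Finset.sum_congr rfl fun i _ => map_nsmul F (lam i) (π i)
  · rw [him, hsol, Set.image_iUnion]

lemma semilinear_union {d : ℕ} {A B : Set (Fin d → ℕ)}
    (hA : IsSemilinearSet' A) (hB : IsSemilinearSet' B) : IsSemilinearSet' (A ∪ B) := by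
  obtain ⟨n, As, hAs, rfl⟩ := hA
  obtain ⟨m, Bs, hBs, rfl⟩ := hB
  refine ⟨n + m, Fin.append As Bs, ?_, ?_⟩
  · intro i
    refine Fin.addCases (motive := fun i => IsLinearSet' (Fin.append As Bs i)) ?_ ?_ i
    · intro i; rw [Fin.append_left]; exact hAs i
    · intro j; rw [Fin.append_right]; exact hBs j
  · ext x
    simp only [Set.mem_union, Set.mem_iUnion]
    constructor
    · rintro (⟨i, hi⟩ | ⟨j, hj⟩)
      · exact ⟨Fin.castAdd m i, by rwa [Fin.append_left]⟩
      · exact ⟨Fin.natAdd n j, by rwa [Fin.append_right]⟩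
    · rintro ⟨i, hi⟩
      exact Fin.addCases
        (motive := fun i => x ∈ Fin.append As Bs i → (∃ i, x ∈ As i) ∨ ∃ j, x ∈ Bs j)
        (fun i h => Or.inl ⟨i, by rwa [Fin.append_left] at h⟩)
        (fun j h => Or.inr ⟨j, by rwa [Fin.append_right] at h⟩) i hi

lemma semilinear_iUnion {d n : ℕ} {Ls : Fin n → Set (Fin d → ℕ)}
    (h : ∀ i, IsSemilinearSet' (Ls i)) : IsSemilinearSet' (⋃ i, Ls i) := by
  induction n with
  | zero =>
    refine ⟨0, Fin.elim0, fun i => i.elim0, ?_⟩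
    ext x; simp
  | succ n ih =>
    have heq : (⋃ i, Ls i) = (⋃ i : Fin n, Ls i.castSucc) ∪ Ls (Fin.last n) := by
      ext x
      simp only [Set.mem_iUnion, Set.mem_union]
      constructor
      · rintro ⟨i, hi⟩
        exact Fin.lastCases
          (motive := fun i => x ∈ Ls i → (∃ j : Fin n, x ∈ Ls j.castSucc) ∨ x ∈ Ls (Fin.last n))
          (fun h => Or.inr h) (fun j h => Or.inl ⟨j, h⟩) i hi
      · rintro (⟨j, hj⟩ | hl)
        · exact ⟨j.castSucc, hj⟩
        · exact ⟨Fin.last n, hl⟩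
    rw [heq]
    exact semilinear_union (ih (fun i => h i.castSucc)) (h (Fin.last n))

end InterSemilinear

theorem inter_semilinear {d : ℕ} {L₁ L₂ : Set (Fin d → ℕ)}
    (h₁ : IsSemilinearSet' L₁) (h₂ : IsSemilinearSet' L₂) :
    IsSemilinearSet' (L₁ ∩ L₂) := by
  obtain ⟨n₁, A, hA, rfl⟩ := h₁
  obtain ⟨n₂, B, hB, rfl⟩ := h₂
  have heq : (⋃ i, A i) ∩ (⋃ j, B j) = ⋃ i : Fin n₁, ⋃ j : Fin n₂, A i ∩ B j := by
    ext x
    simp only [Set.mem_inter_iff, Set.mem_iUnion]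
    tauto
  rw [heq]
  exact InterSemilinear.semilinear_iUnion fun i =>
    InterSemilinear.semilinear_iUnion fun j => InterSemilinear.inter_linear (hA i) (hB j)
end

section
/- With D the quaternion algebra over F_q(t) with Z² = c, F² = t(t−1), ZF = −FZ, for ξ ∈ F_q[Z]* and p = char(F_q), k ≥ 1: (ξFZ)^(p^k) = (−c·N(ξ))^((p^k−1)/2) · (t(t−1))^((p^k−1)/2) · ξFZ. -/
open Quaternion

theorem xiFZ_pow_p_pow {Fq : Type*} [Field Fq] [Fintype Fq] (p : ℕ) [Fact p.Prime]
    (hp : p ≠ 2) [CharP Fq p] (c : Fq) (hc : ¬ IsSquare c) (k : ℕ) (hk : 1 ≤ k)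
    (x y : Fq) (hxy : ¬(x = 0 ∧ y = 0)) :
    let K := RatFunc Fq
    let t : K := RatFunc.X
    let cK : K := algebraMap Fq K c
    let Z : ℍ[K, cK, t * (t - 1)] := ⟨0, 1, 0, 0⟩
    let F : ℍ[K, cK, t * (t - 1)] := ⟨0, 0, 1, 0⟩
    -- ξ = x + y·Z ∈ F_q[Z]*, with norm N(ξ) = x² - c·y²
    let ξ : ℍ[K, cK, t * (t - 1)] :=
      algebraMap K _ (algebraMap Fq K x) + algebraMap K _ (algebraMap Fq K y) * Z
    (ξ * (F * Z)) ^ (p ^ k)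
      = algebraMap K ℍ[K, cK, t * (t - 1)]
          (algebraMap Fq K ((-(c * (x ^ 2 - c * y ^ 2))) ^ ((p ^ k - 1) / 2))
            * (t * (t - 1)) ^ ((p ^ k - 1) / 2))
        * (ξ * (F * Z)) := by
  intro K t cK Z F ξ
  set w : ℍ[K, cK, t * (t - 1)] := ξ * (F * Z) with hw
  have hw2 : w * w = algebraMap K ℍ[K, cK, t * (t - 1)]
      (algebraMap Fq K (-(c * (x ^ 2 - c * y ^ 2))) * (t * (t - 1))) := by
    ext <;> simp [hw, ξ, F, Z, cK, QuaternionAlgebra.re_mul, QuaternionAlgebra.imI_mul,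
      QuaternionAlgebra.imJ_mul, QuaternionAlgebra.imK_mul, map_neg, map_mul, map_pow,
      map_sub, sq, QuaternionAlgebra.coe_mul, QuaternionAlgebra.re_coe,
      QuaternionAlgebra.imI_coe, QuaternionAlgebra.imJ_coe, QuaternionAlgebra.imK_coe]
      <;> ring
  have hodd : Odd (p ^ k) := (Nat.Prime.odd_of_ne_two (Fact.out) hp).pow
  obtain ⟨m, hm⟩ := hodd
  have hdiv : (p ^ k - 1) / 2 = m := by omega
  calc w ^ (p ^ k) = (w * w) ^ m * w := by
        rw [hm, pow_succ, ← sq, ← pow_mul]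
      _ = _ := by
        rw [hw2, ← map_pow, hdiv, mul_pow, ← map_pow]
end

section
/- In the quaternion algebra D over K = F_q(t) with Z² = c, F² = t(t−1), ZF = −FZ, for ξ ∈ F_q[Z] and f(t) ∈ K*, the p^k-th power of cf(t) + ξFZ equals, modulo K*, the element c·g(t) + ξ'FZ where ξ' = (−c)^((1−p^k)/2)·N(ξ)^((p^k−1)/2)·ξ and g(t) = f(t)^(p^k)/(t(t−1))^((p^k−1)/2). -/
open Quaternion

theorem a_xi_f_pow_p_pow_mod_scalars {Fq : Type*} [Field Fq] [Fintype Fq]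
    (p : ℕ) [Fact p.Prime] (hp : p ≠ 2) [CharP Fq p]
    (c : Fq) (hc : ¬ IsSquare c) (k : ℕ) (hk : 1 ≤ k) (x y : Fq) :
    let K := RatFunc Fq
    let t : K := RatFunc.X
    let cK : K := algebraMap Fq K c
    let Z : ℍ[K, cK, t * (t - 1)] := ⟨0, 1, 0, 0⟩
    let F : ℍ[K, cK, t * (t - 1)] := ⟨0, 0, 1, 0⟩
    -- ξ = x + y·Z ∈ F_q[Z], with norm N(ξ) = x² - c·y²
    let ξ : ℍ[K, cK, t * (t - 1)] :=
      algebraMap K _ (algebraMap Fq K x) + algebraMap K _ (algebraMap Fq K y) * Z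
    -- ξ' = (-c)^((1-p^k)/2) · N(ξ)^((p^k-1)/2) · ξ
    let s : Fq := ((-c) ^ ((p ^ k - 1) / 2))⁻¹ * (x ^ 2 - c * y ^ 2) ^ ((p ^ k - 1) / 2)
    let ξ' : ℍ[K, cK, t * (t - 1)] := algebraMap K _ (algebraMap Fq K s) * ξ
    ∀ f : K, f ≠ 0 →
      let g : K := f ^ (p ^ k) / (t * (t - 1)) ^ ((p ^ k - 1) / 2)
      ∃ u : K, u ≠ 0 ∧
        algebraMap K ℍ[K, cK, t * (t - 1)] u
            * (algebraMap K ℍ[K, cK, t * (t - 1)] (cK * g) + ξ' * (F * Z))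
          = (algebraMap K ℍ[K, cK, t * (t - 1)] (cK * f) + ξ * (F * Z)) ^ (p ^ k) := by
  intro K t cK Z F ξ s ξ' f hf g
  -- basic nonvanishing facts
  have hc0 : c ≠ 0 := fun h => hc ⟨0, by simp [h]⟩
  have hcK0 : cK ≠ 0 := by
    simpa [cK] using (map_ne_zero (algebraMap Fq K)).2 hc0
  have ht0 : t ≠ 0 := RatFunc.X_ne_zero
  have ht1 : t - 1 ≠ 0 := by
    intro h
    have h1 : (RatFunc.X : RatFunc Fq) = 1 := by linear_combination h
    have h2 : algebraMap (Polynomial Fq) (RatFunc Fq) Polynomial.X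
        = algebraMap (Polynomial Fq) (RatFunc Fq) (Polynomial.C 1) := by
      simpa [RatFunc.algebraMap_X] using h1
    exact Polynomial.X_ne_C 1 (RatFunc.algebraMap_injective Fq h2)
  have hb0 : t * (t - 1) ≠ 0 := mul_ne_zero ht0 ht1
  -- characteristic p
  haveI : CharP K p := charP_of_injective_algebraMap' Fq (A := K) p
  haveI : CharP ℍ[K, cK, t * (t - 1)] p :=
    charP_of_injective_algebraMap' K (A := ℍ[K, cK, t * (t - 1)]) p
  -- oddness of p^k
  have hpodd : Odd p := (Fact.out : p.Prime).odd_of_ne_two hp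
  have hodd : Odd (p ^ k) := hpodd.pow
  set m : ℕ := (p ^ k - 1) / 2 with hm
  have hpk : p ^ k = 2 * m + 1 := by
    obtain ⟨j, hj⟩ := hodd
    have hjm : m = j := by rw [hm, hj]; omega
    omega
  set w : ℍ[K, cK, t * (t - 1)] := ξ * (F * Z) with hw
  set NK : K := (algebraMap Fq K x) ^ 2 - cK * (algebraMap Fq K y) ^ 2 with hNK
  -- the square of w is a scalar
  have hw2 : w * w = algebraMap K _ (-(cK * (t * (t - 1)) * NK)) := by
    ext <;>
      simp [hw, ξ, F, Z, hNK, QuaternionAlgebra.re_mul, QuaternionAlgebra.imI_mul,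
        QuaternionAlgebra.imJ_mul, QuaternionAlgebra.imK_mul,
        QuaternionAlgebra.algebraMap_eq] <;> ring
  -- powers of w
  have hwpow : w ^ (p ^ k) = algebraMap K _ ((-(cK * (t * (t - 1)) * NK)) ^ m) * w := by
    rw [hpk, pow_succ, pow_mul, sq, hw2, map_pow]
  -- the choice of u
  refine ⟨cK ^ (2 * m) * (t * (t - 1)) ^ m,
    mul_ne_zero (pow_ne_zero _ hcK0) (pow_ne_zero _ hb0), ?_⟩
  -- binomial
  have hcomm : Commute (algebraMap K ℍ[K, cK, t * (t - 1)] (cK * f)) w :=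
    Algebra.commutes (cK * f) w
  have hpow : (algebraMap K ℍ[K, cK, t * (t - 1)] (cK * f) + w) ^ (p ^ k)
      = algebraMap K _ ((cK * f) ^ (p ^ k)) + w ^ (p ^ k) := by
    rw [add_pow_char_pow_of_commute p k hcomm, map_pow]
  -- scalar identities
  have hscal1 : (cK ^ (2 * m) * (t * (t - 1)) ^ m) * (cK * g) = (cK * f) ^ (p ^ k) := by
    simp only [g, hpk]
    rw [show (2 * m + 1 - 1) / 2 = m by omega]
    have hBm := mul_inv_cancel₀ (pow_ne_zero m hb0)
    linear_combination (cK ^ (2 * m) * cK * f ^ (2 * m + 1)) * hBm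
  have hsK : algebraMap Fq K s = ((-cK) ^ m)⁻¹ * NK ^ m := by
    simp only [s, hNK, cK, map_mul, map_inv₀, map_pow, map_neg, map_sub]
    rfl
  have hscal2 : (cK ^ (2 * m) * (t * (t - 1)) ^ m) * algebraMap Fq K s
      = (-(cK * (t * (t - 1)) * NK)) ^ m := by
    have hncK : (-cK) ^ m ≠ 0 := pow_ne_zero m (neg_ne_zero.2 hcK0)
    have h1 : (-(cK * (t * (t - 1)) * NK)) ^ m
        = (-cK) ^ m * ((t * (t - 1)) ^ m * NK ^ m) := by
      rw [show -(cK * (t * (t - 1)) * NK) = (-cK) * ((t * (t - 1)) * NK) from by ring,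
        mul_pow (-cK) ((t * (t - 1)) * NK) m, mul_pow (t * (t - 1)) NK m]
    have h2 : cK ^ (2 * m) = (-cK) ^ m * (-cK) ^ m := by
      rw [← mul_pow, pow_mul]
      congr 1
      ring
    calc cK ^ (2 * m) * (t * (t - 1)) ^ m * algebraMap Fq K s
        = ((-cK) ^ m * ((-cK) ^ m)⁻¹) * ((-cK) ^ m * ((t * (t - 1)) ^ m * NK ^ m)) := by
          rw [hsK, h2]; ring
      _ = (-(cK * (t * (t - 1)) * NK)) ^ m := by
          rw [mul_inv_cancel₀ hncK, one_mul, ← h1]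
  -- put everything together
  have hξ'w : ξ' * (F * Z) = algebraMap K _ (algebraMap Fq K s) * w :=
    mul_assoc _ _ _
  have hkey : algebraMap K ℍ[K, cK, t * (t - 1)] (cK ^ (2 * m) * (t * (t - 1)) ^ m)
        * (algebraMap K ℍ[K, cK, t * (t - 1)] (algebraMap Fq K s) * w)
      = algebraMap K ℍ[K, cK, t * (t - 1)]
          ((cK ^ (2 * m) * (t * (t - 1)) ^ m) * algebraMap Fq K s) * w := by
    rw [← mul_assoc, ← map_mul]
  calc algebraMap K ℍ[K, cK, t * (t - 1)] (cK ^ (2 * m) * (t * (t - 1)) ^ m)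
        * (algebraMap K ℍ[K, cK, t * (t - 1)] (cK * g) + ξ' * (F * Z))
      = algebraMap K ℍ[K, cK, t * (t - 1)]
          ((cK ^ (2 * m) * (t * (t - 1)) ^ m) * (cK * g))
        + algebraMap K ℍ[K, cK, t * (t - 1)]
            ((cK ^ (2 * m) * (t * (t - 1)) ^ m) * algebraMap Fq K s) * w := by
        rw [hξ'w, mul_add, ← map_mul, hkey]
    _ = algebraMap K _ ((cK * f) ^ (p ^ k)) + w ^ (p ^ k) := by
        rw [hscal1, hscal2, hwpow]
    _ = (algebraMap K ℍ[K, cK, t * (t - 1)] (cK * f) + ξ * (F * Z)) ^ (p ^ k) := by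
        rw [← hw, hpow]
end

section
/- Define σ_k(ξ) = (−c)^((1−p^k)/2)·N(ξ)^((p^k−1)/2)·ξ on F_{q²}. If η ∈ F_{q²} satisfies N(η) = cτ/(1−τ) for τ ∈ F_q* with τ ≠ 1, then σ_k(η) = (τ/(τ−1))^((p^k−1)/2)·η and N(σ_k(η)) = c·τ^(p^k)/(1 − τ^(p^k)). -/
theorem sigma_on_M_tau {Fq Fq2 : Type*} [Field Fq] [Fintype Fq]
    [Field Fq2] [Fintype Fq2] [Algebra Fq Fq2]
    (hcard : Fintype.card Fq2 = Fintype.card Fq ^ 2)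
    (p : ℕ) [Fact p.Prime] (hp : p ≠ 2) [CharP Fq p]
    (c : Fq) (hc : ¬ IsSquare c) (τ : Fq) (hτ0 : τ ≠ 0) (hτ1 : τ ≠ 1)
    (k : ℕ) (hk : 1 ≤ k)
    (η : Fq2) (hη : η ^ (Fintype.card Fq + 1) = algebraMap Fq Fq2 (c * τ / (1 - τ))) :
    -- σ_k(η) = (-c)^((1-p^k)/2) · N(η)^((p^k-1)/2) · η
    let σeste : Fq2 := algebraMap Fq Fq2 (((-c) ^ ((p ^ k - 1) / 2))⁻¹)
        * (η ^ (Fintype.card Fq + 1)) ^ ((p ^ k - 1) / 2) * η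
    σeste = algebraMap Fq Fq2 ((τ / (τ - 1)) ^ ((p ^ k - 1) / 2)) * η ∧
      σeste ^ (Fintype.card Fq + 1)
        = algebraMap Fq Fq2 (c * τ ^ (p ^ k) / (1 - τ ^ (p ^ k))) := by
  intro σeste
  have hc0 : c ≠ 0 := fun h => hc (h ▸ IsSquare.zero)
  have hnc : (-c) ≠ 0 := neg_ne_zero.mpr hc0
  have hτ1' : (1 : Fq) - τ ≠ 0 := sub_ne_zero.mpr (Ne.symm hτ1)
  have hτ1'' : τ - 1 ≠ 0 := sub_ne_zero.mpr hτ1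
  set m := (p ^ k - 1) / 2 with hmdef
  have hpodd : Odd (p ^ k) := ((Fact.out : p.Prime).odd_of_ne_two hp).pow
  have hm : m * 2 = p ^ k - 1 := by
    obtain ⟨t, ht⟩ := hpodd
    omega
  have hn1 : p ^ k - 1 + 1 = p ^ k :=
    Nat.succ_pred_eq_of_pos (pow_pos (Fact.out : p.Prime).pos k)
  have h1 : (c * τ / (1 - τ)) / (-c) = τ / (τ - 1) := by
    field_simp
    ring
  have hA : ((-c) ^ m)⁻¹ * (c * τ / (1 - τ)) ^ m = (τ / (τ - 1)) ^ m := by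
    rw [inv_mul_eq_div, ← div_pow, h1]
  have hfirst : σeste = algebraMap Fq Fq2 ((τ / (τ - 1)) ^ m) * η := by
    show algebraMap Fq Fq2 (((-c) ^ m)⁻¹) * (η ^ (Fintype.card Fq + 1)) ^ m * η = _
    rw [hη, ← map_pow, ← map_mul, hA]
  refine ⟨hfirst, ?_⟩
  set B : Fq := (τ / (τ - 1)) ^ m with hBdef
  have hBq : B ^ (Fintype.card Fq + 1) = B ^ 2 := by
    rw [pow_succ, FiniteField.pow_card, sq]
  have hfrob : (τ - 1) ^ p ^ k = τ ^ p ^ k - 1 := by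
    simpa using sub_pow_char_pow (R := Fq) (x := τ) (y := 1) (n := k) (p := p)
  have ht : τ ^ (p ^ k - 1) * τ = τ ^ p ^ k := by rw [← pow_succ, hn1]
  have hs : (τ - 1) ^ (p ^ k - 1) * (1 - τ) = 1 - τ ^ p ^ k := by
    have h2 : (τ - 1) ^ (p ^ k - 1) * (τ - 1) = (τ - 1) ^ p ^ k := by
      rw [← pow_succ, hn1]
    calc (τ - 1) ^ (p ^ k - 1) * (1 - τ)
        = -((τ - 1) ^ (p ^ k - 1) * (τ - 1)) := by ring
      _ = -(τ ^ p ^ k - 1) := by rw [h2, hfrob]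
      _ = 1 - τ ^ p ^ k := by ring
  have hB2 : B ^ 2 = (τ / (τ - 1)) ^ (p ^ k - 1) := by
    rw [hBdef, ← pow_mul, hm]
  have hnum : τ ^ (p ^ k - 1) * (c * τ) = c * τ ^ p ^ k := by rw [← ht]; ring
  have hkey : B ^ 2 * (c * τ / (1 - τ)) = c * τ ^ p ^ k / (1 - τ ^ p ^ k) := by
    rw [hB2, div_pow, div_mul_div_comm, hnum, hs]
  rw [hfirst, mul_pow, ← map_pow, hBq, hη, ← map_mul, hkey]
end

section
/- Let ξ, μ, η, λ ∈ F_{q²} with N(ξ) = N(μ) = −c and N(η) = N(λ) = cτ/(1−τ) (c a non-square in F_q*, τ ∈ F_q* \ {1}) satisfy ξη̄ = λμ̄ and ξ + η = λ + μ. Then λ = η̄ if and only if μ = ξ̄. -/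
theorem lambda_eq_conj_eta_iff_mu_eq_conj_xi {Fq F : Type*} [Field Fq] [Fintype Fq]
    [Field F] [Fintype F] [Algebra Fq F]
    (q : ℕ) (hq : q = Fintype.card Fq) (hodd : Odd q)
    (hcard : Fintype.card F = q ^ 2)
    (c : Fq) (hc : ¬ IsSquare c) (τ : Fq) (hτ0 : τ ≠ 0) (hτ1 : τ ≠ 1)
    (ξ μ η lam : F)
    (hξ : ξ ^ (q + 1) = algebraMap Fq F (-c))
    (hμ : μ ^ (q + 1) = algebraMap Fq F (-c))
    (hη : η ^ (q + 1) = algebraMap Fq F (c * τ / (1 - τ)))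
    (hlam : lam ^ (q + 1) = algebraMap Fq F (c * τ / (1 - τ)))
    (h1 : ξ * η ^ q = lam * μ ^ q) (h2 : ξ + η = lam + μ) :
    lam = η ^ q ↔ μ = ξ ^ q := by
  have hc0 : c ≠ 0 := fun h => hc (h ▸ ⟨0, (mul_zero 0).symm⟩)
  have hmap : Function.Injective (algebraMap Fq F) := (algebraMap Fq F).injective
  have hξ0 : ξ ≠ 0 := by
    intro h
    apply hc0
    have h0 : algebraMap Fq F (-c) = 0 := by
      rw [← hξ, h, zero_pow (Nat.succ_ne_zero q)]
    have := hmap (h0.trans (map_zero _).symm)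
    simpa [neg_eq_zero] using this
  have hval : c * τ / (1 - τ) ≠ 0 :=
    div_ne_zero (mul_ne_zero hc0 hτ0) (sub_ne_zero.mpr (Ne.symm hτ1))
  have hη0 : η ≠ 0 := by
    intro h
    apply hval
    have h0 : algebraMap Fq F (c * τ / (1 - τ)) = 0 := by
      rw [← hη, h, zero_pow (Nat.succ_ne_zero q)]
    exact hmap (h0.trans (map_zero _).symm)
  have hsq : ∀ x : F, (x ^ q) ^ q = x := by
    intro x
    rw [← pow_mul, ← sq, ← hcard, FiniteField.pow_card]
  constructor
  · intro h
    rw [h] at h1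
    have hx : ξ = μ ^ q :=
      mul_left_cancel₀ (pow_ne_zero q hη0) (by rw [mul_comm (η ^ q) ξ, h1, mul_comm])
    rw [hx, hsq]
  · intro h
    rw [h, hsq] at h1
    exact (mul_left_cancel₀ hξ0 (h1.trans (mul_comm lam ξ))).symm
end

section
/- Let ξ, μ, χ ∈ F_{q²} with N(ξ) = N(μ) = N(χ) = −c and η, λ ∈ F_{q²} with N(η) = N(λ) = cτ/(1−τ), satisfying the four equations ξ + η = λ + μ, μ + η = λ + χ, ξη̄ = λμ̄, μη̄ = λχ̄. Then λ = η and ξ = μ = χ. -/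
theorem lambda_eq_eta_and_xi_eq_mu_eq_chi {Fq F : Type*} [Field Fq] [Fintype Fq]
    [Field F] [Fintype F] [Algebra Fq F]
    (q : ℕ) (hq : q = Fintype.card Fq) (hodd : Odd q)
    (hcard : Fintype.card F = q ^ 2)
    (c : Fq) (hc : ¬ IsSquare c) (τ : Fq) (hτ0 : τ ≠ 0) (hτ1 : τ ≠ 1)
    (ξ μ χ η lam : F)
    (hξ : ξ ^ (q + 1) = algebraMap Fq F (-c))
    (hμ : μ ^ (q + 1) = algebraMap Fq F (-c))
    (hχ : χ ^ (q + 1) = algebraMap Fq F (-c))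
    (hη : η ^ (q + 1) = algebraMap Fq F (c * τ / (1 - τ)))
    (hlam : lam ^ (q + 1) = algebraMap Fq F (c * τ / (1 - τ)))
    (e1 : ξ + η = lam + μ) (e2 : μ + η = lam + χ)
    (e3 : ξ * η ^ q = lam * μ ^ q) (e4 : μ * η ^ q = lam * χ ^ q) :
    lam = η ∧ ξ = μ ∧ μ = χ := by
  have hc0 : c ≠ 0 := by rintro rfl; exact hc ⟨0, by ring⟩
  have hinj : Function.Injective (algebraMap Fq F) := (algebraMap Fq F).injective
  have hAc : algebraMap Fq F (-c) ≠ 0 := by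
    rw [Ne, map_eq_zero_iff _ hinj, neg_eq_zero]; exact hc0
  have hξ0 : ξ ≠ 0 := by
    rintro rfl; exact hAc (by simpa using hξ.symm)
  have h1τ : (1 : Fq) - τ ≠ 0 := sub_ne_zero_of_ne (Ne.symm hτ1)
  have hηval : c * τ / (1 - τ) ≠ 0 := div_ne_zero (mul_ne_zero hc0 hτ0) h1τ
  have hAη : algebraMap Fq F (c * τ / (1 - τ)) ≠ 0 := by
    rw [Ne, map_eq_zero_iff _ hinj]; exact hηval
  have hη0 : η ≠ 0 := by rintro rfl; exact hAη (by simpa using hη.symm)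
  have hηq0 : η ^ q ≠ 0 := pow_ne_zero _ hη0
  -- key: ξ * η^q * χ^q = μ^(q+1) * η^q = ξ^(q+1) * η^q
  have key : ξ * η ^ q * χ ^ q = ξ ^ (q + 1) * η ^ q := by
    have h4 : lam * χ ^ q * μ ^ q = μ ^ (q + 1) * η ^ q := by
      rw [← e4]; ring
    calc ξ * η ^ q * χ ^ q = lam * μ ^ q * χ ^ q := by rw [e3]
      _ = μ ^ (q + 1) * η ^ q := by rw [← h4]; ring
      _ = ξ ^ (q + 1) * η ^ q := by rw [hμ, hξ]
  have hqq : χ ^ q = ξ ^ q := by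
    have h : ξ * η ^ q * χ ^ q = ξ * η ^ q * ξ ^ q := by
      rw [key]; ring
    exact mul_left_cancel₀ (mul_ne_zero hξ0 hηq0) h
  have hpow : ∀ x : F, (x ^ q) ^ q = x := by
    intro x
    rw [← pow_mul, ← sq, ← hcard, FiniteField.pow_card]
  have hχξ : χ = ξ := by rw [← hpow χ, hqq, hpow]
  have hchar2 : ringChar F ≠ 2 := by
    intro h
    have h2 := FiniteField.even_card_iff_char_two.mp h
    rw [hcard] at h2
    have h3 : q ^ 2 % 2 = 1 := Nat.odd_iff.mp hodd.pow
    omega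
  have h2 : (2 : F) ≠ 0 := by
    intro h
    have hdvd : ringChar F ∣ 2 := by
      have := (CharP.cast_eq_zero_iff F (ringChar F) 2).mp (by exact_mod_cast h)
      exact this
    have hone : ringChar F ≠ 1 := CharP.ringChar_ne_one
    rcases (Nat.dvd_prime Nat.prime_two).mp hdvd with h' | h'
    · exact hone h'
    · exact hchar2 h' 
  have hξμ : ξ = μ := by
    have h : (2 : F) * ξ = 2 * μ := by linear_combination e1 - e2 - hχξ
    exact mul_left_cancel₀ h2 h
  refine ⟨by linear_combination -e1 + hξμ, hξμ, ?_⟩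
  rw [hχξ, hξμ]
end

section
/- In the group Γ₃ = ⟨a,b,x,y | ax = x⁻¹b, ay = y⁻¹b⁻¹, ay⁻¹ = xa⁻¹, bx = yb⁻¹⟩, the assignment a ↦ a³, b ↦ b³, x ↦ x⁻³, y ↦ y⁻³ extends to a group endomorphism of Γ₃ (i.e., the images satisfy the four defining relations). -/
namespace Gamma3

/-- generators: 0 ↦ a, 1 ↦ b, 2 ↦ x, 3 ↦ y -/
def a' : FreeGroup (Fin 4) := FreeGroup.of 0
def b' : FreeGroup (Fin 4) := FreeGroup.of 1
def x' : FreeGroup (Fin 4) := FreeGroup.of 2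
def y' : FreeGroup (Fin 4) := FreeGroup.of 3

/-- Relators of Γ₃ = ⟨a,b,x,y | ax = x⁻¹b, ay = y⁻¹b⁻¹, ay⁻¹ = xa⁻¹, bx = yb⁻¹⟩. -/
def rels : Set (FreeGroup (Fin 4)) :=
  { a' * x' * (x'⁻¹ * b')⁻¹,
    a' * y' * (y'⁻¹ * b'⁻¹)⁻¹,
    a' * y'⁻¹ * (x' * a'⁻¹)⁻¹,
    b' * x' * (y' * b'⁻¹)⁻¹ }

/-- The group Γ₃. -/
def Gamma3 := PresentedGroup rels

instance : Group Gamma3 := by unfold Gamma3; infer_instance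

def a : Gamma3 := PresentedGroup.of 0
def b : Gamma3 := PresentedGroup.of 1
def x : Gamma3 := PresentedGroup.of 2
def y : Gamma3 := PresentedGroup.of 3

private lemma keyA {G : Type*} [Group G] (a b x y : G)
    (h1 : a * x * (x⁻¹ * b)⁻¹ = 1) (h2 : a * y * (y⁻¹ * b⁻¹)⁻¹ = 1)
    (h3 : a * y⁻¹ * (x * a⁻¹)⁻¹ = 1) (h4 : b * x * (y * b⁻¹)⁻¹ = 1) :
    a ^ 3 * x⁻¹ ^ 3 * ((x⁻¹ ^ 3)⁻¹ * b ^ 3)⁻¹ = 1 := by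
  calc a ^ 3 * x⁻¹ ^ 3 * ((x⁻¹ ^ 3)⁻¹ * b ^ 3)⁻¹
      = (a * a * a * x⁻¹ * x⁻¹ * x⁻¹ * b⁻¹ * b⁻¹ * y⁻¹) * (b * x * (y * b⁻¹)⁻¹)⁻¹ * (a * a * a * x⁻¹ * x⁻¹ * x⁻¹ * b⁻¹ * b⁻¹ * y⁻¹)⁻¹ *
        (a * a * a * x⁻¹ * x⁻¹ * x⁻¹ * b⁻¹ * y) * (a * y * (y⁻¹ * b⁻¹)⁻¹)⁻¹ * (a * a * a * x⁻¹ * x⁻¹ * x⁻¹ * b⁻¹ * y)⁻¹ *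
        (a * a * a * x⁻¹ * x⁻¹ * b * y⁻¹) * (b * x * (y * b⁻¹)⁻¹)⁻¹ * (a * a * a * x⁻¹ * x⁻¹ * b * y⁻¹)⁻¹ *
        (a * a * a * x⁻¹) * (a * x * (x⁻¹ * b)⁻¹)⁻¹ * (a * a * a * x⁻¹)⁻¹ *
        (a * a * y * a⁻¹) * (a * y⁻¹ * (x * a⁻¹)⁻¹) * (a * a * y * a⁻¹)⁻¹ *
        (a) * (a * y * (y⁻¹ * b⁻¹)⁻¹) * (a)⁻¹ *
        (a * y⁻¹ * x⁻¹ * a⁻¹) * (a * x * (x⁻¹ * b)⁻¹) * (a * y⁻¹ * x⁻¹ * a⁻¹)⁻¹ *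
        (a * y⁻¹) * (a * x * (x⁻¹ * b)⁻¹)⁻¹ * (a * y⁻¹)⁻¹ *
        (a * y⁻¹ * (x * a⁻¹)⁻¹) := by group; norm_num [zpow_ofNat, pow_succ, mul_assoc]
    _ = 1 := by rw [h1, h2, h3, h4]; group

private lemma keyB {G : Type*} [Group G] (a b x y : G)
    (h1 : a * x * (x⁻¹ * b)⁻¹ = 1) (h2 : a * y * (y⁻¹ * b⁻¹)⁻¹ = 1)
    (h3 : a * y⁻¹ * (x * a⁻¹)⁻¹ = 1) (h4 : b * x * (y * b⁻¹)⁻¹ = 1) :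
    a ^ 3 * y⁻¹ ^ 3 * ((y⁻¹ ^ 3)⁻¹ * (b ^ 3)⁻¹)⁻¹ = 1 := by
  calc a ^ 3 * y⁻¹ ^ 3 * ((y⁻¹ ^ 3)⁻¹ * (b ^ 3)⁻¹)⁻¹
      = (a * a * a * y⁻¹ * y⁻¹ * b⁻¹ * x⁻¹ * b⁻¹) * (b * x * (y * b⁻¹)⁻¹) * (a * a * a * y⁻¹ * y⁻¹ * b⁻¹ * x⁻¹ * b⁻¹)⁻¹ *
        (a * a * a * y⁻¹ * y⁻¹ * b⁻¹ * x⁻¹ * b * x⁻¹ * b⁻¹) * (b * x * (y * b⁻¹)⁻¹) * (a * a * a * y⁻¹ * y⁻¹ * b⁻¹ * x⁻¹ * b * x⁻¹ * b⁻¹)⁻¹ *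
        (a * a * a * y⁻¹ * y⁻¹ * b⁻¹) * (a * x * (x⁻¹ * b)⁻¹)⁻¹ * (a * a * a * y⁻¹ * y⁻¹ * b⁻¹)⁻¹ *
        (a * a * a * y⁻¹) * (a * y * (y⁻¹ * b⁻¹)⁻¹)⁻¹ * (a * a * a * y⁻¹)⁻¹ *
        (a * a) * (a * y⁻¹ * (x * a⁻¹)⁻¹) * (a * a)⁻¹ *
        (a) * (a * x * (x⁻¹ * b)⁻¹) * (a)⁻¹ *
        (a * x⁻¹ * y⁻¹ * a⁻¹) * (a * y * (y⁻¹ * b⁻¹)⁻¹) * (a * x⁻¹ * y⁻¹ * a⁻¹)⁻¹ *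
        (a * x⁻¹) * (a * y * (y⁻¹ * b⁻¹)⁻¹)⁻¹ * (a * x⁻¹)⁻¹ *
        (y * a⁻¹) * (a * y⁻¹ * (x * a⁻¹)⁻¹) * (y * a⁻¹)⁻¹ := by group; norm_num [zpow_ofNat, pow_succ, mul_assoc]
    _ = 1 := by rw [h1, h2, h3, h4]; group

private lemma keyC {G : Type*} [Group G] (a b x y : G)
    (h1 : a * x * (x⁻¹ * b)⁻¹ = 1) (h2 : a * y * (y⁻¹ * b⁻¹)⁻¹ = 1)
    (h3 : a * y⁻¹ * (x * a⁻¹)⁻¹ = 1) (h4 : b * x * (y * b⁻¹)⁻¹ = 1) :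
    a ^ 3 * (y⁻¹ ^ 3)⁻¹ * (x⁻¹ ^ 3 * (a ^ 3)⁻¹)⁻¹ = 1 := by
  calc a ^ 3 * (y⁻¹ ^ 3)⁻¹ * (x⁻¹ ^ 3 * (a ^ 3)⁻¹)⁻¹
      = (a * a) * (a * y * (y⁻¹ * b⁻¹)⁻¹) * (a * a)⁻¹ *
        (a * a * y⁻¹ * b⁻¹ * y * b⁻¹ * y⁻¹ * a⁻¹) * (a * y * (y⁻¹ * b⁻¹)⁻¹) * (a * a * y⁻¹ * b⁻¹ * y * b⁻¹ * y⁻¹ * a⁻¹)⁻¹ *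
        (a * a * y⁻¹ * x * b * y⁻¹) * (b * x * (y * b⁻¹)⁻¹)⁻¹ * (a * a * y⁻¹ * x * b * y⁻¹)⁻¹ *
        (a * a * y⁻¹ * x * a⁻¹) * (a * y⁻¹ * (x * a⁻¹)⁻¹) * (a * a * y⁻¹ * x * a⁻¹)⁻¹ *
        (a * a * y⁻¹ * x * a⁻¹ * b * x⁻¹ * a⁻¹) * (a * x * (x⁻¹ * b)⁻¹) * (a * a * y⁻¹ * x * a⁻¹ * b * x⁻¹ * a⁻¹)⁻¹ *
        (a * a * y⁻¹) * (a * y⁻¹ * (x * a⁻¹)⁻¹)⁻¹ * (a * a * y⁻¹)⁻¹ *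
        (a * a * y⁻¹ * a * b⁻¹ * x⁻¹ * b⁻¹) * (b * x * (y * b⁻¹)⁻¹) * (a * a * y⁻¹ * a * b⁻¹ * x⁻¹ * b⁻¹)⁻¹ *
        (a) * (a * y⁻¹ * (x * a⁻¹)⁻¹) * (a)⁻¹ *
        (a * x * (x⁻¹ * b)⁻¹) := by group; norm_num [zpow_ofNat, pow_succ, mul_assoc]
    _ = 1 := by rw [h1, h2, h3, h4]; group

private lemma keyD {G : Type*} [Group G] (a b x y : G)
    (h1 : a * x * (x⁻¹ * b)⁻¹ = 1) (h2 : a * y * (y⁻¹ * b⁻¹)⁻¹ = 1)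
    (h3 : a * y⁻¹ * (x * a⁻¹)⁻¹ = 1) (h4 : b * x * (y * b⁻¹)⁻¹ = 1) :
    b ^ 3 * x⁻¹ ^ 3 * (y⁻¹ ^ 3 * (b ^ 3)⁻¹)⁻¹ = 1 := by
  calc b ^ 3 * x⁻¹ ^ 3 * (y⁻¹ ^ 3 * (b ^ 3)⁻¹)⁻¹
      = (b * b * b * x⁻¹ * x⁻¹) * (a * x * (x⁻¹ * b)⁻¹)⁻¹ * (b * b * b * x⁻¹ * x⁻¹)⁻¹ *
        (b * b * b * x⁻¹ * a⁻¹ * y * a⁻¹) * (a * y⁻¹ * (x * a⁻¹)⁻¹) * (b * b * b * x⁻¹ * a⁻¹ * y * a⁻¹)⁻¹ *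
        (b * b * x) * (a * x * (x⁻¹ * b)⁻¹)⁻¹ * (b * b * x)⁻¹ *
        (b * b * x * y * b⁻¹) * (b * x * (y * b⁻¹)⁻¹) * (b * b * x * y * b⁻¹)⁻¹ *
        (b * b * x * y * b⁻¹ * a⁻¹) * (a * y * (y⁻¹ * b⁻¹)⁻¹) * (b * b * x * y * b⁻¹ * a⁻¹)⁻¹ *
        (b * b * x) * (b * x * (y * b⁻¹)⁻¹)⁻¹ * (b * b * x)⁻¹ *
        (b * b * x * b) * (a * y⁻¹ * (x * a⁻¹)⁻¹)⁻¹ * (b * b * x * b)⁻¹ *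
        (b) * (b * x * (y * b⁻¹)⁻¹) * (b)⁻¹ *
        (y⁻¹ * a⁻¹) * (a * y * (y⁻¹ * b⁻¹)⁻¹) * (y⁻¹ * a⁻¹)⁻¹ := by group; norm_num [zpow_ofNat, pow_succ, mul_assoc]
    _ = 1 := by rw [h1, h2, h3, h4]; group


private lemma rel_mk {r : FreeGroup (Fin 4)} (hr : r ∈ rels) :
    PresentedGroup.mk rels r = (1 : Gamma3) :=
  (QuotientGroup.eq_one_iff r).mpr (Subgroup.subset_normalClosure hr)

private lemma hrel1 : a * x * (x⁻¹ * b)⁻¹ = 1 := by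
  have h := rel_mk (Set.mem_insert _ _)
  simp only [map_mul, map_inv] at h; exact h

private lemma hrel2 : a * y * (y⁻¹ * b⁻¹)⁻¹ = 1 := by
  have h := rel_mk (Set.mem_insert_of_mem _ (Set.mem_insert _ _))
  simp only [map_mul, map_inv] at h; exact h

private lemma hrel3 : a * y⁻¹ * (x * a⁻¹)⁻¹ = 1 := by
  have h := rel_mk (Set.mem_insert_of_mem _ (Set.mem_insert_of_mem _ (Set.mem_insert _ _)))
  simp only [map_mul, map_inv] at h; exact h

private lemma hrel4 : b * x * (y * b⁻¹)⁻¹ = 1 := by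
  have h := rel_mk (Set.mem_insert_of_mem _ (Set.mem_insert_of_mem _
    (Set.mem_insert_of_mem _ (Set.mem_singleton_iff.mpr rfl))))
  simp only [map_mul, map_inv] at h; exact h

private def f : Fin 4 → Gamma3 := ![a ^ 3, b ^ 3, x⁻¹ ^ 3, y⁻¹ ^ 3]

private lemma hf : ∀ r ∈ rels, FreeGroup.lift f r = 1 := by
  intro r hr
  simp only [rels, Set.mem_insert_iff, Set.mem_singleton_iff] at hr
  rcases hr with rfl | rfl | rfl | rfl <;>
    simp only [a', b', x', y', map_mul, map_inv, FreeGroup.lift_apply_of]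
  · exact keyA a b x y hrel1 hrel2 hrel3 hrel4
  · exact keyB a b x y hrel1 hrel2 hrel3 hrel4
  · exact keyC a b x y hrel1 hrel2 hrel3 hrel4
  · exact keyD a b x y hrel1 hrel2 hrel3 hrel4

/-- The assignment a ↦ a³, b ↦ b³, x ↦ x⁻³, y ↦ y⁻³ extends to an endomorphism of Γ₃. -/
theorem power_endomorphism :
    ∃ φ : Gamma3 →* Gamma3,
      φ a = a ^ 3 ∧ φ b = b ^ 3 ∧ φ x = x⁻¹ ^ 3 ∧ φ y = y⁻¹ ^ 3 := by
  exact ⟨PresentedGroup.toGroup hf,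
    PresentedGroup.toGroup.of hf, PresentedGroup.toGroup.of hf,
    PresentedGroup.toGroup.of hf, PresentedGroup.toGroup.of hf⟩

end Gamma3
end
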